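/- Let G be a graph in which every non-trivial automorphism moves infinitely many edges, such that G has only finitely many vertices of infinite degree and the graph G_{¬∞} obtained from G by deleting all vertices of infinite degree has only finitely many non-singleton connected components and only finitely many edges. Then G_{¬∞} has only finitely many isolated vertices; equivalently, it is impossible that all but finitely many components of G_{¬∞} are singletons while G has infinite edge motion and finitely many infinite-degree vertices, since otherwise two vertices of G would have the same neighbourhood and their transposition would be a non-trivial automorphism moving only finitely many edges. -/

import Mathlib

/-- Let `G` have infinite edge motion, only finitely many vertices of
infinite degree, and suppose the subgraph `G_{¬∞}` induced by the finite-degree vertices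
has only finitely many non-singleton connected components and only finitely many edges.
Then `G_{¬∞}` has only finitely many isolated vertices. -/
theorem stmt_9 {V : Type} (G : SimpleGraph V)
    (hmotion : ∀ γ : G ≃g G, (∃ v, γ v ≠ v) →
      {e : Sym2 V | e ∈ G.edgeSet ∧ e.map γ ≠ e}.Infinite)
    (hinf : {v : V | (G.neighborSet v).Infinite}.Finite)
    (hcomp : {c : (G.induce {v : V | (G.neighborSet v).Finite}).ConnectedComponent |
      ¬ c.supp.Subsingleton}.Finite)
    (hedge : (G.induce {v : V | (G.neighborSet v).Finite}).edgeSet.Finite) :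
    {w : {v : V | (G.neighborSet v).Finite} |
      ∀ u, ¬ (G.induce {v : V | (G.neighborSet v).Finite}).Adj w u}.Finite := by
  classical
  set S := {v : V | (G.neighborSet v).Finite} with hS
  by_contra hI
  rw [← Set.not_infinite, not_not] at hI
  -- every isolated vertex has all its G-neighbours of infinite degree
  have hsub : ∀ w : S, (∀ u, ¬ (G.induce S).Adj w u) →
      G.neighborSet (w : V) ⊆ {v : V | (G.neighborSet v).Infinite} := by
    intro w hw v hv
    by_contra hvfin
    rw [Set.mem_setOf_eq, Set.not_infinite] at hvfin
    exact hw ⟨v, hvfin⟩ hv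
  -- pigeonhole: two distinct isolated vertices with the same neighbourhood
  have hmaps : Set.MapsTo (fun w : S => G.neighborSet (w : V))
      {w : S | ∀ u, ¬ (G.induce S).Adj w u}
      {t : Set V | t ⊆ {v : V | (G.neighborSet v).Infinite}} := by
    intro w hw
    exact hsub w hw
  obtain ⟨u, hu, w, hw, hune, hNeq⟩ :=
    hI.exists_ne_map_eq_of_mapsTo hmaps hinf.finite_subsets
  have hne : (u : V) ≠ (w : V) := fun h => hune (Subtype.ext h)
  have huw_iff : ∀ b, G.Adj (u : V) b ↔ G.Adj (w : V) b := by
    intro b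
    rw [← SimpleGraph.mem_neighborSet, ← SimpleGraph.mem_neighborSet, hNeq]
  have hnadj : ¬ G.Adj (u : V) (w : V) := by
    intro h
    have : (w : V) ∈ {v : V | (G.neighborSet v).Infinite} := hsub u hu h
    exact this w.2
  have hnadj' : ¬ G.Adj (w : V) (u : V) := fun h => hnadj h.symm
  set σ := Equiv.swap (u : V) (w : V) with hσ
  have step : ∀ a b : V, G.Adj a b → G.Adj (σ a) (σ b) := by
    intro a b hab
    by_cases hau : a = (u : V)
    · subst hau
      have hbu : b ≠ (u : V) := fun h => (G.loopless.irrefl _ (h ▸ hab)).elim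
      have hbw : b ≠ (w : V) := fun h => hnadj (h ▸ hab)
      rw [hσ, Equiv.swap_apply_left, Equiv.swap_apply_of_ne_of_ne hbu hbw]
      exact (huw_iff b).mp hab
    · by_cases haw : a = (w : V)
      · subst haw
        have hbw : b ≠ (w : V) := fun h => (G.loopless.irrefl _ (h ▸ hab)).elim
        have hbu : b ≠ (u : V) := fun h => hnadj' (h ▸ hab)
        rw [hσ, Equiv.swap_apply_right, Equiv.swap_apply_of_ne_of_ne hbu hbw]
        exact (huw_iff b).mpr hab
      · rw [hσ, Equiv.swap_apply_of_ne_of_ne hau haw]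
        by_cases hbu : b = (u : V)
        · subst hbu
          rw [Equiv.swap_apply_left]
          exact ((huw_iff a).mp hab.symm).symm
        · by_cases hbw : b = (w : V)
          · subst hbw
            rw [Equiv.swap_apply_right]
            exact ((huw_iff a).mpr hab.symm).symm
          · rw [Equiv.swap_apply_of_ne_of_ne hbu hbw]
            exact hab
  let γ : G ≃g G := ⟨σ, by
    intro a b
    constructor
    · intro h
      have := step _ _ h
      simpa [hσ] using this
    · exact step a b⟩
  have hγcoe : ∀ x, γ x = σ x := fun _ => rfl
  have hγne : ∃ v, γ v ≠ v := ⟨(u : V), by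
    rw [hγcoe, hσ, Equiv.swap_apply_left]; exact hne.symm⟩
  have hmoved := hmotion γ hγne
  -- but γ moves only finitely many edges
  have hfin_u : (G.incidenceSet (u : V)).Finite := by
    have : Finite (G.neighborSet (u : V)) := u.2
    have : Finite (G.incidenceSet (u : V)) :=
      Finite.of_equiv _ (G.incidenceSetEquivNeighborSet (u : V)).symm
    exact Set.finite_coe_iff.mp this
  have hfin_w : (G.incidenceSet (w : V)).Finite := by
    have : Finite (G.neighborSet (w : V)) := w.2
    have : Finite (G.incidenceSet (w : V)) :=
      Finite.of_equiv _ (G.incidenceSetEquivNeighborSet (w : V)).symm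
    exact Set.finite_coe_iff.mp this
  have hsubset : {e : Sym2 V | e ∈ G.edgeSet ∧ e.map γ ≠ e} ⊆
      G.incidenceSet (u : V) ∪ G.incidenceSet (w : V) := by
    intro e he
    obtain ⟨heE, hemoved⟩ := he
    by_contra hmem
    rw [Set.mem_union, not_or] at hmem
    apply hemoved
    induction e with
    | _ a b =>
      have hau : a ≠ (u : V) := fun h => hmem.1 ⟨heE, by rw [h]; exact Sym2.mem_mk_left _ _⟩
      have haw : a ≠ (w : V) := fun h => hmem.2 ⟨heE, by rw [h]; exact Sym2.mem_mk_left _ _⟩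
      have hbu : b ≠ (u : V) := fun h => hmem.1 ⟨heE, by rw [h]; exact Sym2.mem_mk_right _ _⟩
      have hbw : b ≠ (w : V) := fun h => hmem.2 ⟨heE, by rw [h]; exact Sym2.mem_mk_right _ _⟩
      show Sym2.map (⇑γ) s(a, b) = s(a, b)
      have h1 : γ a = a := by rw [hγcoe]; exact Equiv.swap_apply_of_ne_of_ne hau haw
      have h2 : γ b = b := by rw [hγcoe]; exact Equiv.swap_apply_of_ne_of_ne hbu hbw
      rw [Sym2.map_pair_eq, h1, h2]
  exact hmoved ((hfin_u.union hfin_w).subset hsubset)
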